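/- Let 0 → X_n → ⋯ → X_1 → X_0 → M → 0 be an exact sequence of Λ-modules with n ≥ 0. Then M belongs to [X_0]_1 • [Ω^{-1}(X_1)]_1 • ⋯ • [Ω^{-n}(X_n)]_1, and in particular M ∈ [⊕_{i=0}^n Ω^{-i}(X_i)]_{n+1}. -/

import Mathlib

open CategoryTheory



namespace ITHelp

variable {R : Type} [Ring R]

section Hull
variable {I : Type} [AddCommGroup I] [Module R I]

/-- Elementwise essential extension of submodules. -/
def EssIn (N H : Submodule R I) : Prop :=
  N ≤ H ∧ ∀ x ∈ H, x ≠ 0 → ∃ r : R, r • x ∈ N ∧ r • x ≠ 0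

lemma essIn_self (N : Submodule R I) : EssIn N N :=
  ⟨le_rfl, fun x hx hx0 => ⟨1, by simpa using hx, by simpa using hx0⟩⟩

/-- A module retract of an injective module is injective. -/
lemma injective_of_retract {M : Type} [AddCommGroup M] [Module R M]
    [Module.Injective R I] (ι : M →ₗ[R] I) (π : I →ₗ[R] M)
    (hπι : ∀ x, π (ι x) = x) : Module.Injective R M := by
  constructor
  intro X Y _ _ _ _ f hf g
  obtain ⟨h, hh⟩ := Module.Injective.out f hf (ι.comp g)
  exact ⟨π.comp h, fun x => by simp [hh x, hπι]⟩

/-- Existence of an "injective hull" of a submodule inside an injective module. -/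
theorem exists_hull [inj : Module.Injective R I] (N : Submodule R I) :
    ∃ H H' : Submodule R I, EssIn N H ∧ IsCompl H H' ∧ Module.Injective R ↥H := by
  classical
  -- Step 1: maximal essential extension of N inside I
  obtain ⟨H, hHmem, hHmax⟩ :
      ∃ H, (EssIn N H) ∧ ∀ H₂, EssIn N H₂ → H ≤ H₂ → H₂ = H := by
    obtain ⟨H, -, hmem, hmax⟩ := zorn_le_nonempty₀ {H | EssIn N H} (fun c hc hchain y hy => by
      refine ⟨sSup c, ⟨?_, ?_⟩, fun z hz => le_sSup hz⟩
      · exact le_trans (hc hy).1 (le_sSup hy)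
      · intro x hx hx0
        rw [Submodule.mem_sSup_of_directed ⟨y, hy⟩ hchain.directedOn] at hx
        obtain ⟨H₀, hH₀, hxH₀⟩ := hx
        exact (hc hH₀).2 x hxH₀ hx0) N (essIn_self N)
    exact ⟨H, hmem, fun H₂ h2 hle => le_antisymm (hmax h2 hle) hle⟩
  -- Step 2: complement H' of H
  obtain ⟨H', hH'mem, hH'max⟩ :
      ∃ H', (H' ⊓ H = ⊥) ∧ ∀ P, P ⊓ H = ⊥ → H' ≤ P → P = H' := by
    obtain ⟨H', -, hmem, hmax⟩ := zorn_le_nonempty₀ {P | P ⊓ H = ⊥} (fun c hc hchain y hy => by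
      refine ⟨sSup c, ?_, fun z hz => le_sSup hz⟩
      show sSup c ⊓ H = ⊥
      rw [Submodule.eq_bot_iff]
      rintro x hx
      obtain ⟨hx1, hx2⟩ := Submodule.mem_inf.1 hx
      obtain ⟨P₀, hP₀, hxP₀⟩ :=
        (Submodule.mem_sSup_of_directed ⟨y, hy⟩ hchain.directedOn).1 hx1
      have : x ∈ P₀ ⊓ H := ⟨hxP₀, hx2⟩
      rwa [hc hP₀, Submodule.mem_bot] at this) ⊥ (by simp)
    exact ⟨H', hmem, fun P hP hle => le_antisymm (hmax hP hle) hle⟩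
  -- Step 3: the image of H in I ⧸ H' is (elementwise) essential
  have hess : ∀ z : I ⧸ H', z ≠ 0 → ∃ r : R, r • z ∈ H.map H'.mkQ ∧ r • z ≠ 0 := by
    have hlat : ∀ P : Submodule R (I ⧸ H'), P ⊓ H.map H'.mkQ = ⊥ → P = ⊥ := by
      intro P hP
      have hLH : (P.comap H'.mkQ) ⊓ H = ⊥ := by
        rw [Submodule.eq_bot_iff]
        rintro x ⟨hx1, hx2⟩
        have hmem2 : H'.mkQ x ∈ P ⊓ H.map H'.mkQ := ⟨hx1, ⟨x, hx2, rfl⟩⟩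
        rw [hP, Submodule.mem_bot] at hmem2
        have hxH' : x ∈ H' := by
          rwa [Submodule.mkQ_apply, Submodule.Quotient.mk_eq_zero] at hmem2
        have : x ∈ H' ⊓ H := ⟨hxH', hx2⟩
        rwa [hH'mem, Submodule.mem_bot] at this
      have hcom : H' ≤ P.comap H'.mkQ := fun x hx => by
        have hx0 : H'.mkQ x = 0 := by
          rwa [Submodule.mkQ_apply, Submodule.Quotient.mk_eq_zero]
        simp [Submodule.mem_comap, hx0]
      have hPH' : P.comap H'.mkQ = H' := hH'max _ hLH hcom
      rw [Submodule.eq_bot_iff]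
      intro z hz
      obtain ⟨x, rfl⟩ := H'.mkQ_surjective z
      have hxP : x ∈ P.comap H'.mkQ := hz
      rw [hPH'] at hxP
      rwa [Submodule.mkQ_apply, Submodule.Quotient.mk_eq_zero]
    intro z hz
    by_contra hcon
    push_neg at hcon
    have hspan : Submodule.span R {z} ⊓ H.map H'.mkQ = ⊥ := by
      rw [Submodule.eq_bot_iff]
      rintro w ⟨hw1, hw2⟩
      obtain ⟨r, rfl⟩ := Submodule.mem_span_singleton.1 hw1
      by_contra hw0
      exact hw0 (hcon r hw2)
    have := hlat _ hspan
    have hzmem : z ∈ Submodule.span R ({z} : Set (I ⧸ H')) :=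
      Submodule.mem_span_singleton_self z
    rw [this, Submodule.mem_bot] at hzmem
    exact hz hzmem
  -- Step 4: extend the identity of H along H → I ⧸ H'
  have hfinj : Function.Injective ((H'.mkQ).comp H.subtype) := by
    intro x y hxy
    simp only [LinearMap.comp_apply, Submodule.subtype_apply] at hxy
    have : H'.mkQ ((x : I) - (y : I)) = 0 := by rw [map_sub, hxy, sub_self]
    rw [Submodule.mkQ_apply, Submodule.Quotient.mk_eq_zero] at this
    have hmem : ((x : I) - y) ∈ H' ⊓ H := ⟨this, H.sub_mem x.2 y.2⟩
    rw [hH'mem, Submodule.mem_bot, sub_eq_zero] at hmem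
    exact Subtype.ext hmem
  obtain ⟨h, hh⟩ := Module.Injective.out ((H'.mkQ).comp H.subtype) hfinj H.subtype
  -- hh : ∀ x : ↥H, h (mkQ x) = x
  set r : I →ₗ[R] I := h.comp H'.mkQ with hr
  have hrH : ∀ x ∈ H, r x = x := fun x hx => hh ⟨x, hx⟩
  -- Step 5 : h is injective
  have hhinj : Function.Injective h := by
    intro z₁ z₂ h12
    have hdiff : h (z₁ - z₂) = 0 := by rw [map_sub, h12, sub_self]
    by_contra hne
    have hz : z₁ - z₂ ≠ 0 := fun h0 => hne (by rwa [sub_eq_zero] at h0)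
    obtain ⟨r₁, hr₁, hr₁0⟩ := hess _ hz
    obtain ⟨x, hxH, hxeq⟩ := hr₁
    have : h (r₁ • (z₁ - z₂)) = x := by rw [← hxeq]; exact hh ⟨x, hxH⟩
    rw [map_smul, hdiff, smul_zero] at this
    rw [← hxeq] at hr₁0
    rw [← this] at hr₁0
    simp at hr₁0
  -- Step 6 : range r = H
  have hrange : LinearMap.range r = H := by
    have hHle : H ≤ LinearMap.range r := fun x hx => ⟨x, hrH x hx⟩
    refine hHmax _ ⟨hHmem.1.trans hHle, ?_⟩ hHle
    rintro y ⟨z, rfl⟩ hy0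
    obtain ⟨r₁, hr₁, hr₁0⟩ := hess (H'.mkQ z) (by
      intro h0
      have : r z = 0 := by rw [hr, LinearMap.comp_apply, h0, map_zero]
      exact hy0 this)
    obtain ⟨x, hxH, hxeq⟩ := hr₁
    have hx0 : x ≠ 0 := by
      intro h0; rw [h0] at hxeq
      rw [← hxeq] at hr₁0; simp at hr₁0
    obtain ⟨r₂, hr₂, hr₂0⟩ := hHmem.2 x hxH hx0
    refine ⟨r₂ * r₁, ?_, ?_⟩
    · have : r₁ • r z = x := by
        rw [hr, LinearMap.comp_apply, ← map_smul, ← hxeq]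
        exact hh ⟨x, hxH⟩
      rw [mul_smul, this]; exact hr₂
    · have : r₁ • r z = x := by
        rw [hr, LinearMap.comp_apply, ← map_smul, ← hxeq]
        exact hh ⟨x, hxH⟩
      rw [mul_smul, this]; exact hr₂0
  -- Step 7 : IsCompl H (ker r)
  have hcompl : IsCompl H (LinearMap.ker r) := by
    constructor
    · rw [disjoint_iff, Submodule.eq_bot_iff]
      rintro x hx
      obtain ⟨hx1, hx2⟩ := Submodule.mem_inf.1 hx
      rw [LinearMap.mem_ker] at hx2
      rw [hrH x hx1] at hx2; exact hx2
    · rw [codisjoint_iff, Submodule.eq_top_iff']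
      intro x
      have hrx : r x ∈ H := by rw [← hrange]; exact ⟨x, rfl⟩
      have : x - r x ∈ LinearMap.ker r := by
        rw [LinearMap.mem_ker, map_sub, hrH (r x) hrx, sub_self]
      have hxeq : x = r x + (x - r x) := by abel
      rw [hxeq]
      exact Submodule.add_mem_sup hrx this
  -- Step 8 : ↥H is injective
  have hHinj : Module.Injective R ↥H := by
    refine injective_of_retract H.subtype
      (LinearMap.codRestrict H r (fun c => by rw [← hrange]; exact ⟨c, rfl⟩)) ?_
    intro x
    exact Subtype.ext (hrH x x.2)
  exact ⟨H, LinearMap.ker r, hHmem, hcompl, hHinj⟩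

end Hull
end ITHelp

namespace ITHelp2
open ITHelp

variable {R : Type} [Ring R]

section Summ
variable {X Y J Q : Type} [AddCommGroup X] [Module R X] [AddCommGroup Y] [Module R Y]
  [AddCommGroup J] [Module R J] [AddCommGroup Q] [Module R Q]

/-- If `X` is a summand of `Y`, `Y` embeds in an injective `J` with cokernel `Q`,
then `X` embeds in an injective module with cokernel a summand of `Q`. -/
theorem summ [injJ : Module.Injective R J]
    (v : Y →ₗ[R] J) (hv : Function.Injective v)
    (π : J →ₗ[R] Q) (hπ : Function.Surjective π) (hexact : Function.Exact v π)
    (s : X →ₗ[R] Y) (p : Y →ₗ[R] X) (hps : ∀ x, p (s x) = x) :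
    ∃ (H : Submodule R J) (u : X →ₗ[R] ↥H), Module.Injective R ↥H ∧
      Function.Injective u ∧
      ∃ (α : (↥H ⧸ LinearMap.range u) →ₗ[R] Q) (β : Q →ₗ[R] (↥H ⧸ LinearMap.range u)),
        ∀ z, β (α z) = z := by
  classical
  set NX := LinearMap.range (v.comp s) with hNX
  set X' := LinearMap.ker p with hX'
  set N' := LinearMap.range (v.comp X'.subtype) with hN'
  have hvs_inj : Function.Injective (v.comp s) := by
    intro a b hab
    have := hv hab
    rw [← hps a, this, hps b]
  -- (a) NX ⊓ N' = ⊥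
  have hdisj : NX ⊓ N' = ⊥ := by
    rw [Submodule.eq_bot_iff]
    rintro w hw
    obtain ⟨hw1, hw2⟩ := Submodule.mem_inf.1 hw
    obtain ⟨a, ha⟩ := hw1
    obtain ⟨b, hb⟩ := hw2
    have hab : v (s a) = v (b : Y) := by
      rw [← hb] at ha; exact ha
    have hsa : s a = (b : Y) := hv hab
    have : a = 0 := by rw [← hps a, hsa]; exact b.2
    rw [← ha, this]; simp
  -- (b) NX ⊔ N' = range v
  have hsup : NX ⊔ N' = LinearMap.range v := by
    apply le_antisymm
    · apply sup_le
      · rintro w ⟨a, rfl⟩; exact ⟨s a, rfl⟩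
      · rintro w ⟨b, rfl⟩; exact ⟨X'.subtype b, rfl⟩
    · rintro w ⟨y, rfl⟩
      have hy : y = s (p y) + (y - s (p y)) := by abel
      have hker : y - s (p y) ∈ X' := by
        rw [hX', LinearMap.mem_ker, map_sub, hps, sub_self]
      have heq : v y = v (s (p y)) + v (y - s (p y)) := by rw [← map_add, ← hy]
      rw [heq]
      exact Submodule.add_mem_sup ⟨p y, rfl⟩ ⟨⟨y - s (p y), hker⟩, rfl⟩
  -- hull of NX
  obtain ⟨H, K, hEss, hcompl, hHinj⟩ := exists_hull (R := R) (I := J) NX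
  have hNXH : NX ≤ H := hEss.1
  -- (c) N' ⊓ H = ⊥
  have hN'H : N' ⊓ H = ⊥ := by
    rw [Submodule.eq_bot_iff]
    intro w hw
    obtain ⟨hw1, hw2⟩ := Submodule.mem_inf.1 hw
    by_contra hw0
    obtain ⟨r, hr1, hr2⟩ := hEss.2 w hw2 hw0
    have : r • w ∈ NX ⊓ N' := ⟨hr1, N'.smul_mem r hw1⟩
    rw [hdisj, Submodule.mem_bot] at this
    exact hr2 this
  set u : X →ₗ[R] ↥H := LinearMap.codRestrict H (v.comp s) (fun c => hNXH ⟨c, rfl⟩) with hu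
  have huinj : Function.Injective u := by
    intro a b hab
    apply hvs_inj
    exact congrArg Subtype.val hab
  set πH := Submodule.linearProjOfIsCompl H K hcompl with hπH
  set πK := Submodule.linearProjOfIsCompl K H hcompl.symm with hπK
  have hprojsum : ∀ x : J, ((πH x : J) + (πK x : J)) = x := by
    intro x
    exact Submodule.projection_add_projection_eq_self hcompl x
  -- Φ : K →ₗ H extending πH along πK on N'
  have hπKinj : Function.Injective (πK.comp N'.subtype) := by
    intro a b hab
    apply Subtype.ext
    have hab' : πK ((a : N') : J) = πK ((b : N') : J) := by
      simpa using hab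
    have hd : ((a : J) - (b : J)) = ((πH (a : J) : J) - (πH (b : J) : J)) := by
      conv_lhs => rw [← hprojsum ((a : N') : J), ← hprojsum ((b : N') : J)]
      rw [hab']; abel
    have hmem : ((a : J) - (b : J)) ∈ N' ⊓ H := by
      constructor
      · exact N'.sub_mem a.2 b.2
      · rw [hd]; exact H.sub_mem (πH (a : J)).2 (πH (b : J)).2
    rw [hN'H, Submodule.mem_bot, sub_eq_zero] at hmem
    exact hmem
  obtain ⟨Φ, hΦ⟩ := Module.Injective.out (πK.comp N'.subtype) hπKinj (πH.comp N'.subtype)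
  -- ψ : J →ₗ H
  set ψ : J →ₗ[R] ↥H := πH - Φ.comp πK with hψ
  have hψN' : ∀ w ∈ N', ψ w = 0 := by
    intro w hw
    have h2 : Φ (πK w) = πH w := by simpa using hΦ ⟨w, hw⟩
    rw [hψ]
    simp only [LinearMap.sub_apply, LinearMap.comp_apply]
    rw [h2, sub_self]
  have hψH : ∀ h₀ : ↥H, ψ (h₀ : J) = h₀ := by
    intro h₀
    rw [hψ]
    simp only [LinearMap.sub_apply, LinearMap.comp_apply]
    show H.projectionOnto K hcompl ↑h₀ - Φ (K.projectionOnto H hcompl.symm ↑h₀) = h₀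
    rw [Submodule.projectionOnto_apply_left hcompl h₀,
      Submodule.projectionOnto_apply_of_mem_right hcompl.symm h₀.2, map_zero, sub_zero]
  have hψNX : ∀ x : X, ψ (v (s x)) = u x := by
    intro x
    have : v (s x) ∈ H := hNXH ⟨x, rfl⟩
    have := hψH ⟨v (s x), this⟩
    exact this
  -- α
  have hπv : ∀ y : Y, π (v y) = 0 := fun y => (hexact (v y)).mpr ⟨y, rfl⟩
  have hα0 : LinearMap.range u ≤ LinearMap.ker (π.comp H.subtype) := by
    rintro w ⟨x, rfl⟩
    rw [LinearMap.mem_ker, LinearMap.comp_apply]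
    show π ((u x : J)) = 0
    rw [hu]
    exact hπv (s x)
  set α := Submodule.liftQ (LinearMap.range u) (π.comp H.subtype) hα0 with hαdef
  -- e : J ⧸ range v ≃ Q
  have hrv_ker : LinearMap.range v ≤ LinearMap.ker π := by
    rintro w ⟨y, rfl⟩; exact hπv y
  set e0 := Submodule.liftQ (LinearMap.range v) π hrv_ker with he0
  have he0bij : Function.Bijective e0 := by
    constructor
    · rw [← LinearMap.ker_eq_bot, Submodule.eq_bot_iff]
      intro z hz
      obtain ⟨x, rfl⟩ := Submodule.Quotient.mk_surjective _ z
      rw [LinearMap.mem_ker, Submodule.liftQ_apply] at hz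
      rw [Submodule.Quotient.mk_eq_zero]
      exact (hexact x).mp hz
    · intro q
      obtain ⟨x, rfl⟩ := hπ q
      exact ⟨Submodule.Quotient.mk x, Submodule.liftQ_apply _ _ _⟩
  set e := LinearEquiv.ofBijective e0 he0bij with he
  -- β
  have hβ0 : LinearMap.range v ≤ LinearMap.ker ((LinearMap.range u).mkQ.comp ψ) := by
    rw [← hsup]
    apply sup_le
    · rintro w ⟨x, rfl⟩
      simp only [LinearMap.mem_ker, LinearMap.comp_apply]
      rw [hψNX x, Submodule.mkQ_apply, Submodule.Quotient.mk_eq_zero]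
      exact ⟨x, rfl⟩
    · rintro w ⟨b, rfl⟩
      rw [LinearMap.mem_ker, LinearMap.comp_apply, hψN' _ ⟨b, rfl⟩]
      simp
  set β := (Submodule.liftQ (LinearMap.range v) ((LinearMap.range u).mkQ.comp ψ) hβ0).comp
    (e.symm : Q →ₗ[R] (J ⧸ LinearMap.range v)) with hβdef
  refine ⟨H, u, hHinj, huinj, α, β, ?_⟩
  intro z
  obtain ⟨h₀, rfl⟩ := Submodule.Quotient.mk_surjective _ z
  have hαz : α (Submodule.Quotient.mk h₀) = π (h₀ : J) := by
    rw [hαdef]; simp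
  have hesymm : e.symm (π (h₀ : J)) = Submodule.Quotient.mk (p := LinearMap.range v) (h₀ : J) := by
    apply e.injective
    rw [LinearEquiv.apply_symm_apply, he]
    show _ = e0 (Submodule.Quotient.mk (h₀ : J))
    rw [he0]; simp
  rw [hαz, hβdef, LinearMap.comp_apply]
  simp only [LinearEquiv.coe_coe]
  rw [hesymm]
  have hlift : (Submodule.liftQ (LinearMap.range v) ((LinearMap.range u).mkQ.comp ψ) hβ0)
      (Submodule.Quotient.mk (h₀ : J)) = (LinearMap.range u).mkQ (ψ (h₀ : J)) := by simp
  rw [hlift, hψH h₀]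
  rfl

end Summ
end ITHelp2

namespace ITHelp3
open ITHelp

variable {R : Type} [Ring R]

/-- Product of two injective modules is injective. -/
lemma injective_prod {A B : Type} [AddCommGroup A] [Module R A] [AddCommGroup B] [Module R B]
    [ia : Module.Injective R A] [ib : Module.Injective R B] :
    Module.Injective R (A × B) := by
  constructor
  intro X Y _ _ _ _ f hf g
  obtain ⟨h₁, hh₁⟩ := Module.Injective.out f hf ((LinearMap.fst R A B).comp g)
  obtain ⟨h₂, hh₂⟩ := Module.Injective.out f hf ((LinearMap.snd R A B).comp g)
  exact ⟨h₁.prod h₂, fun x => by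
    simp only [LinearMap.prod_apply, Function.prod, hh₁ x, hh₂ x, LinearMap.comp_apply]
    rfl⟩

/-- A pi-type of injective modules is injective. -/
lemma injective_pi {k : ℕ} {M : Fin k → Type} [∀ i, AddCommGroup (M i)] [∀ i, Module R (M i)]
    [im : ∀ i, Module.Injective R (M i)] : Module.Injective R (∀ i, M i) := by
  constructor
  intro X Y _ _ _ _ f hf g
  have h : ∀ i : Fin k, ∃ hi : Y →ₗ[R] M i, ∀ x, hi (f x) = (LinearMap.proj i).comp g x :=
    fun i => Module.Injective.out f hf ((LinearMap.proj i).comp g)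
  choose hi hhi using h
  exact ⟨LinearMap.pi hi, fun x => by
    funext i
    exact hhi i x⟩

/-- The pi of a family of linear maps. -/
def piMap {k : ℕ} {M N : Fin k → Type} [∀ i, AddCommGroup (M i)] [∀ i, Module R (M i)]
    [∀ i, AddCommGroup (N i)] [∀ i, Module R (N i)] (v : ∀ i, M i →ₗ[R] N i) :
    (∀ i, M i) →ₗ[R] (∀ i, N i) :=
  LinearMap.pi (fun i => (v i).comp (LinearMap.proj i))

lemma piMap_apply {k : ℕ} {M N : Fin k → Type} [∀ i, AddCommGroup (M i)] [∀ i, Module R (M i)]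
    [∀ i, AddCommGroup (N i)] [∀ i, Module R (N i)] (v : ∀ i, M i →ₗ[R] N i)
    (x : ∀ i, M i) (i : Fin k) : piMap v x i = v i (x i) := rfl

lemma piMap_injective {k : ℕ} {M N : Fin k → Type} [∀ i, AddCommGroup (M i)]
    [∀ i, Module R (M i)] [∀ i, AddCommGroup (N i)] [∀ i, Module R (N i)]
    {v : ∀ i, M i →ₗ[R] N i} (hv : ∀ i, Function.Injective (v i)) :
    Function.Injective (piMap v) := by
  intro x y hxy
  funext i
  exact hv i (congrFun hxy i)

lemma piMap_surjective {k : ℕ} {M N : Fin k → Type} [∀ i, AddCommGroup (M i)]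
    [∀ i, Module R (M i)] [∀ i, AddCommGroup (N i)] [∀ i, Module R (N i)]
    {v : ∀ i, M i →ₗ[R] N i} (hv : ∀ i, Function.Surjective (v i)) :
    Function.Surjective (piMap v) := by
  intro y
  choose x hx using fun i => hv i (y i)
  exact ⟨x, funext hx⟩

lemma exact_mkQ {M N : Type} [AddCommGroup M] [Module R M] [AddCommGroup N] [Module R N]
    (v : M →ₗ[R] N) : Function.Exact ⇑v ⇑(LinearMap.range v).mkQ := fun y => by
  rw [Submodule.mkQ_apply, Submodule.Quotient.mk_eq_zero]
  exact ⟨fun ⟨x, hx⟩ => ⟨x, hx⟩, fun ⟨x, hx⟩ => ⟨x, hx⟩⟩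

lemma piMap_exact {k : ℕ} {M N Q : Fin k → Type} [∀ i, AddCommGroup (M i)]
    [∀ i, Module R (M i)] [∀ i, AddCommGroup (N i)] [∀ i, Module R (N i)]
    [∀ i, AddCommGroup (Q i)] [∀ i, Module R (Q i)]
    {v : ∀ i, M i →ₗ[R] N i} {π : ∀ i, N i →ₗ[R] Q i}
    (h : ∀ i, Function.Exact (v i) (π i)) :
    Function.Exact (piMap v) (piMap π) := by
  intro y
  constructor
  · intro hy
    choose x hx using fun i => (h i (y i)).mp (congrFun hy i)
    exact ⟨x, funext hx⟩
  · rintro ⟨x, rfl⟩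
    funext i
    exact (h i (piMap v x i)).mpr ⟨x i, rfl⟩

section Ext
variable {A B C JA JC QA QC : Type}
  [AddCommGroup A] [Module R A] [AddCommGroup B] [Module R B] [AddCommGroup C] [Module R C]
  [AddCommGroup JA] [Module R JA] [AddCommGroup JC] [Module R JC]
  [AddCommGroup QA] [Module R QA] [AddCommGroup QC] [Module R QC]

/-- Horseshoe-type lemma: embed the middle of a SES in the product of injectives
containing the ends; the cokernel is an extension of the coker of the ends. -/
theorem ext_embed [injA : Module.Injective R JA]
    (f : A →ₗ[R] B) (hf : Function.Injective f)
    (g : B →ₗ[R] C) (hg : Function.Surjective g) (hfg : Function.Exact f g)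
    (a : A →ₗ[R] JA) (ha : Function.Injective a)
    (πa : JA →ₗ[R] QA) (hπa : Function.Surjective πa) (hexa : Function.Exact a πa)
    (c : C →ₗ[R] JC) (hc : Function.Injective c)
    (πc : JC →ₗ[R] QC) (hπc : Function.Surjective πc) (hexc : Function.Exact c πc) :
    ∃ v : B →ₗ[R] (JA × JC), Function.Injective v ∧
      ∃ (qa : QA →ₗ[R] ((JA × JC) ⧸ LinearMap.range v))
        (qc : ((JA × JC) ⧸ LinearMap.range v) →ₗ[R] QC),
        Function.Injective qa ∧ Function.Surjective qc ∧ Function.Exact qa qc := by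
  classical
  -- extend a along f
  obtain ⟨h, hh⟩ := Module.Injective.out f hf a
  set v : B →ₗ[R] JA × JC := h.prod (c.comp g) with hvdef
  have hvap : ∀ x, v x = (h x, c (g x)) := fun x => rfl
  have hvinj : Function.Injective v := by
    intro x y hxy
    have h1 : h x = h y := congrArg Prod.fst hxy
    have h2 : c (g x) = c (g y) := congrArg Prod.snd hxy
    have h3 : g (x - y) = 0 := by rw [map_sub, hc h2, sub_self]
    obtain ⟨z, hz⟩ := (hfg _).mp h3
    have h4 : h (x - y) = 0 := by rw [map_sub, h1, sub_self]
    rw [← hz, hh] at h4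
    have : z = 0 := ha (by rw [h4, map_zero])
    rw [this, map_zero] at hz
    rw [← sub_eq_zero, ← hz]
  set p := LinearMap.range v with hp
  -- qc
  have hqc0 : p ≤ LinearMap.ker (πc.comp (LinearMap.snd R JA JC)) := by
    rintro w ⟨x, rfl⟩
    rw [LinearMap.mem_ker, LinearMap.comp_apply]
    show πc (c (g x)) = 0
    exact (hexc _).mpr ⟨g x, rfl⟩
  set qc := Submodule.liftQ p (πc.comp (LinearMap.snd R JA JC)) hqc0 with hqc
  -- qa : via liftQ over range a
  have hain : ∀ z : A, ((a z, 0) : JA × JC) ∈ p := by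
    intro z
    refine ⟨f z, ?_⟩
    rw [hvap]
    have h1 : h (f z) = a z := hh z
    have h2 : g (f z) = 0 := (hfg _).mpr ⟨z, rfl⟩
    rw [h1, h2, map_zero]
  have hqa0 : LinearMap.range a ≤
      LinearMap.ker (p.mkQ.comp ((LinearMap.inl R JA JC))) := by
    rintro w ⟨z, rfl⟩
    rw [LinearMap.mem_ker, LinearMap.comp_apply]
    rw [Submodule.mkQ_apply, Submodule.Quotient.mk_eq_zero]
    exact hain z
  -- eA : JA ⧸ range a ≃ QA
  have hra_ker : LinearMap.range a ≤ LinearMap.ker πa := by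
    rintro w ⟨z, rfl⟩; exact (hexa _).mpr ⟨z, rfl⟩
  set eA0 := Submodule.liftQ (LinearMap.range a) πa hra_ker with heA0
  have heAbij : Function.Bijective eA0 := by
    constructor
    · rw [← LinearMap.ker_eq_bot, Submodule.eq_bot_iff]
      intro z hz
      obtain ⟨x, rfl⟩ := Submodule.Quotient.mk_surjective _ z
      rw [LinearMap.mem_ker, Submodule.liftQ_apply] at hz
      rw [Submodule.Quotient.mk_eq_zero]
      exact (hexa x).mp hz
    · intro q
      obtain ⟨x, rfl⟩ := hπa q
      exact ⟨Submodule.Quotient.mk x, rfl⟩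
  set eA := LinearEquiv.ofBijective eA0 heAbij with heA
  set qa := (Submodule.liftQ (LinearMap.range a) (p.mkQ.comp (LinearMap.inl R JA JC)) hqa0).comp
    (eA.symm : QA →ₗ[R] (JA ⧸ LinearMap.range a)) with hqadef
  have hqa_apply : ∀ z : JA, qa (πa z) = Submodule.Quotient.mk (p := p) ((z, 0) : JA × JC) := by
    intro z
    have h1 : eA.symm (πa z) = Submodule.Quotient.mk (p := LinearMap.range a) z := by
      apply eA.injective
      rw [LinearEquiv.apply_symm_apply, heA]
      show _ = eA0 (Submodule.Quotient.mk z)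
      rw [heA0]; simp
    rw [hqadef, LinearMap.comp_apply]
    simp only [LinearEquiv.coe_coe]
    rw [h1]
    simp
  refine ⟨v, hvinj, qa, qc, ?_, ?_, ?_⟩
  · -- qa injective
    intro w₁ w₂ h12
    obtain ⟨z₁, rfl⟩ := hπa w₁
    obtain ⟨z₂, rfl⟩ := hπa w₂
    rw [hqa_apply, hqa_apply] at h12
    have hmem : ((z₁, 0) : JA × JC) - (z₂, 0) ∈ p := (Submodule.Quotient.eq p).mp h12
    have hmem' : ((z₁ - z₂, 0) : JA × JC) ∈ p := by
      convert hmem using 1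
      ext <;> simp
    obtain ⟨x, hx⟩ := hmem'
    rw [hvap] at hx
    simp only [Prod.mk.injEq] at hx
    obtain ⟨hx1, hx2⟩ := hx
    have hgx0 : g x = 0 := hc (by rw [hx2, map_zero])
    obtain ⟨z, hz⟩ := (hfg _).mp hgx0
    have hz1 : a z = z₁ - z₂ := by rw [← hh, hz, hx1]
    have : πa (z₁ - z₂) = 0 := by rw [← hz1]; exact (hexa _).mpr ⟨z, rfl⟩
    rw [map_sub, sub_eq_zero] at this
    exact this
  · -- qc surjective
    intro q
    obtain ⟨x, rfl⟩ := hπc q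
    exact ⟨Submodule.Quotient.mk ((0, x) : JA × JC), rfl⟩
  · -- exact
    intro w
    constructor
    · intro hw
      obtain ⟨y, rfl⟩ := Submodule.Quotient.mk_surjective _ w
      obtain ⟨y₁, y₂⟩ := y
      have hw2 : πc y₂ = 0 := hw
      obtain ⟨z, hz⟩ := (hexc _).mp hw2
      obtain ⟨x, hx⟩ := hg z
      refine ⟨πa (y₁ - h x), ?_⟩
      rw [hqa_apply]
      apply (Submodule.Quotient.eq p).mpr
      have : ((y₁ - h x, 0) : JA × JC) - (y₁, y₂) = -(h x, y₂) := by ext <;> simp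
      rw [this]
      refine p.neg_mem ⟨x, ?_⟩
      rw [hvap, hx, hz]
    · rintro ⟨q, rfl⟩
      obtain ⟨z, rfl⟩ := hπa q
      rw [hqa_apply, hqc, Submodule.liftQ_apply, LinearMap.comp_apply]
      show πc 0 = 0
      rw [map_zero]

end Ext
end ITHelp3

namespace ITHelp4
variable {R : Type} [Ring R]

section Push
variable {K B M J : Type} [AddCommGroup K] [Module R K] [AddCommGroup B] [Module R B]
  [AddCommGroup M] [Module R M] [AddCommGroup J] [Module R J]

/-- Pushout of a SES `0 → K → B → M → 0` along an embedding `K ↪ J` with `J` injective: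
`M` is a direct summand of an extension of `J ⧸ K` by `B`. -/
theorem pushout_summand [injJ : Module.Injective R J]
    (ι : K →ₗ[R] B) (hι : Function.Injective ι)
    (g : B →ₗ[R] M) (hg : Function.Surjective g) (hexact : Function.Exact ι g)
    (v : K →ₗ[R] J) (hv : Function.Injective v) :
    ∃ (jB : B →ₗ[R] ((J × B) ⧸ LinearMap.range (v.prod (-ι))))
      (πQ : ((J × B) ⧸ LinearMap.range (v.prod (-ι))) →ₗ[R] (J ⧸ LinearMap.range v))
      (σ : M →ₗ[R] ((J × B) ⧸ LinearMap.range (v.prod (-ι))))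
      (πM : ((J × B) ⧸ LinearMap.range (v.prod (-ι))) →ₗ[R] M),
      Function.Injective jB ∧ Function.Surjective πQ ∧ Function.Exact jB πQ ∧
      ∀ m, πM (σ m) = m := by
  classical
  set t := v.prod (-ι) with ht
  have htap : ∀ x, t x = (v x, -ι x) := fun x => rfl
  set p := LinearMap.range t with hpdef
  set jB : B →ₗ[R] ((J × B) ⧸ p) := p.mkQ.comp (LinearMap.inr R J B) with hjB
  have hjBinj : Function.Injective jB := by
    intro b₁ b₂ hb
    have : ((0 : J), b₁ - b₂) ∈ p := by
      rw [← Submodule.Quotient.mk_eq_zero]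
      have : jB (b₁ - b₂) = 0 := by rw [map_sub, hb, sub_self]
      simpa [hjB] using this
    obtain ⟨x, hx⟩ := this
    rw [htap] at hx
    simp only [Prod.mk.injEq] at hx
    obtain ⟨hx1, hx2⟩ := hx
    have hx0 : x = 0 := hv (by rw [hx1, map_zero])
    rw [hx0] at hx2
    simp only [map_zero, neg_zero] at hx2
    exact sub_eq_zero.mp hx2.symm
  have hπQ0 : p ≤ LinearMap.ker ((LinearMap.range v).mkQ.comp (LinearMap.fst R J B)) := by
    rintro w ⟨x, rfl⟩
    simp only [LinearMap.mem_ker, LinearMap.comp_apply, htap]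
    rw [Submodule.mkQ_apply, Submodule.Quotient.mk_eq_zero]
    exact ⟨x, rfl⟩
  set πQ := Submodule.liftQ p ((LinearMap.range v).mkQ.comp (LinearMap.fst R J B)) hπQ0
    with hπQ
  have hπQsurj : Function.Surjective πQ := by
    intro q
    obtain ⟨j, rfl⟩ := Submodule.Quotient.mk_surjective _ q
    exact ⟨Submodule.Quotient.mk ((j, 0) : J × B), rfl⟩
  have hexact2 : Function.Exact jB πQ := by
    intro w
    obtain ⟨⟨j, b⟩, rfl⟩ := Submodule.Quotient.mk_surjective _ w
    constructor
    · intro hw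
      have : j ∈ LinearMap.range v := by
        have : (LinearMap.range v).mkQ j = 0 := hw
        rwa [Submodule.mkQ_apply, Submodule.Quotient.mk_eq_zero] at this
      obtain ⟨x, rfl⟩ := this
      refine ⟨b + ι x, ?_⟩
      show Submodule.Quotient.mk ((0 : J), b + ι x) = Submodule.Quotient.mk ((v x, b)) 
      apply (Submodule.Quotient.eq p).mpr
      refine ⟨-x, ?_⟩
      rw [htap]
      ext <;> simp
    · rintro ⟨b', hb'⟩
      have : Submodule.Quotient.mk (p := p) ((j, b) : J × B) =
          Submodule.Quotient.mk ((0 : J), b') := hb'.symm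
      have hmem : ((j, b) : J × B) - (0, b') ∈ p := (Submodule.Quotient.eq p).mp this
      obtain ⟨x, hx⟩ := hmem
      rw [htap] at hx
      have hj : v x = j := by
        have := congrArg Prod.fst hx
        simpa using this
      show (LinearMap.range v).mkQ j = 0
      rw [Submodule.mkQ_apply, Submodule.Quotient.mk_eq_zero]
      exact ⟨x, hj⟩
  -- πM
  have hπM0 : p ≤ LinearMap.ker (g.comp (LinearMap.snd R J B)) := by
    rintro w ⟨x, rfl⟩
    simp only [LinearMap.mem_ker, LinearMap.comp_apply, htap]
    show g (-ι x) = 0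
    rw [map_neg, (hexact (ι x)).mpr ⟨x, rfl⟩, neg_zero]
  set πM := Submodule.liftQ p (g.comp (LinearMap.snd R J B)) hπM0 with hπM
  have hπMsurj : Function.Surjective πM := by
    intro m
    obtain ⟨b, rfl⟩ := hg m
    exact ⟨Submodule.Quotient.mk ((0, b) : J × B), rfl⟩
  -- ιJ and retraction
  set ιJ : J →ₗ[R] ((J × B) ⧸ p) := p.mkQ.comp (LinearMap.inl R J B) with hιJ
  have hιJinj : Function.Injective ιJ := by
    intro j₁ j₂ hj
    have : ((j₁ - j₂ : J), (0 : B)) ∈ p := by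
      rw [← Submodule.Quotient.mk_eq_zero]
      have : ιJ (j₁ - j₂) = 0 := by rw [map_sub, hj, sub_self]
      simpa [hιJ] using this
    obtain ⟨x, hx⟩ := this
    rw [htap] at hx
    simp only [Prod.mk.injEq] at hx
    obtain ⟨hx1, hx2⟩ := hx
    have hx0 : x = 0 := hι (by
      have : -ι x = 0 := hx2
      have := neg_eq_zero.mp this
      rw [this, map_zero])
    rw [hx0, map_zero] at hx1
    exact sub_eq_zero.mp hx1.symm
  obtain ⟨ρ, hρ⟩ := Module.Injective.out ιJ hιJinj (LinearMap.id : J →ₗ[R] J)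
  -- ker πM = range ιJ
  have hkerπM : LinearMap.ker πM = LinearMap.range ιJ := by
    apply le_antisymm
    · intro w hw
      obtain ⟨⟨j, b⟩, rfl⟩ := Submodule.Quotient.mk_surjective _ w
      rw [LinearMap.mem_ker] at hw
      have hb : g b = 0 := hw
      obtain ⟨x, hx⟩ := (hexact b).mp hb
      refine ⟨j + v x, ?_⟩
      show Submodule.Quotient.mk ((j + v x, 0) : J × B) = Submodule.Quotient.mk ((j, b)) 
      apply (Submodule.Quotient.eq p).mpr
      refine ⟨x, ?_⟩
      rw [htap]
      ext
      · simp
      · simp [hx]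
    · rintro w ⟨j, rfl⟩
      rw [LinearMap.mem_ker]
      show g ((0 : B)) = 0
      exact map_zero g
  -- τ and σ
  set τ := LinearMap.id - ιJ.comp ρ with hτ
  have hτ0 : LinearMap.ker πM ≤ LinearMap.ker τ := by
    rw [hkerπM]
    rintro w ⟨j, rfl⟩
    rw [LinearMap.mem_ker, hτ]
    simp only [LinearMap.sub_apply, LinearMap.id_apply, LinearMap.comp_apply]
    rw [hρ j]; simp
  set e0 := Submodule.liftQ (LinearMap.ker πM) πM le_rfl with he0
  have he0bij : Function.Bijective e0 := by
    constructor
    · rw [← LinearMap.ker_eq_bot, Submodule.eq_bot_iff]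
      intro z hz
      obtain ⟨x, rfl⟩ := Submodule.Quotient.mk_surjective _ z
      rw [LinearMap.mem_ker] at hz
      rw [Submodule.Quotient.mk_eq_zero]
      exact hz
    · intro m
      obtain ⟨x, rfl⟩ := hπMsurj m
      exact ⟨Submodule.Quotient.mk x, rfl⟩
  set eM := LinearEquiv.ofBijective e0 he0bij with heM
  set σ := (Submodule.liftQ (LinearMap.ker πM) τ hτ0).comp
    (eM.symm : M →ₗ[R] (((J × B) ⧸ p) ⧸ LinearMap.ker πM)) with hσ
  refine ⟨jB, πQ, σ, πM, hjBinj, hπQsurj, hexact2, ?_⟩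
  intro m
  obtain ⟨x, rfl⟩ := hπMsurj m
  have hsymm : eM.symm (πM x) = Submodule.Quotient.mk (p := LinearMap.ker πM) x := by
    apply eM.injective
    rw [LinearEquiv.apply_symm_apply, heM]
    show _ = e0 (Submodule.Quotient.mk x)
    rw [he0, Submodule.liftQ_apply]
  rw [hσ, LinearMap.comp_apply]
  simp only [LinearEquiv.coe_coe]
  rw [hsymm, Submodule.liftQ_apply, hτ]
  simp only [LinearMap.sub_apply, LinearMap.id_apply, LinearMap.comp_apply]
  rw [map_sub]
  have : πM (ιJ (ρ x)) = 0 := by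
    have : ιJ (ρ x) ∈ LinearMap.ker πM := hkerπM ▸ ⟨ρ x, rfl⟩
    rwa [LinearMap.mem_ker] at this
  rw [this, sub_zero]

end Push
end ITHelp4

namespace ITPaper

variable (R : Type) [Ring R]

/-- `X` is a direct summand of `Y`. -/
def IsSummand (X Y : ModuleCat.{0} R) : Prop :=
  ∃ (i : X ⟶ Y) (p : Y ⟶ X), i ≫ p = 𝟙 X

/-- The additive closure `add S` of a class of modules: direct summands of finite
direct sums of members of `S`. -/
def addClosure (S : Set (ModuleCat.{0} R)) : Set (ModuleCat.{0} R) :=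
  {X | ∃ (n : ℕ) (f : Fin n → ModuleCat.{0} R), (∀ i, f i ∈ S) ∧
    IsSummand R X (ModuleCat.of R (∀ i, f i))}

/-- `add T` for a single module `T`. -/
def addOf (T : ModuleCat.{0} R) : Set (ModuleCat.{0} R) := addClosure R {T}

/-- There is a short exact sequence `0 → A → B → C → 0`. -/
def SES (A B C : ModuleCat.{0} R) : Prop :=
  ∃ (f : A ⟶ B) (g : B ⟶ C),
    Function.Injective ⇑f ∧ Function.Surjective ⇑g ∧ Function.Exact ⇑f ⇑g

/-- The extension product `U • V` of two classes of modules. -/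
def bullet (U V : Set (ModuleCat.{0} R)) : Set (ModuleCat.{0} R) :=
  addClosure R {M | ∃ A ∈ U, ∃ C ∈ V, SES R A M C}

/-- `[T]ₙ`, the class of modules obtained from `add T` by `n`-fold extensions. -/
def bracket (T : ModuleCat.{0} R) : ℕ → Set (ModuleCat.{0} R)
  | 0 => {X | Subsingleton X}
  | 1 => addOf R T
  | (n+2) => bullet R (addOf R T) (bracket T (n+1))

/-- `U₁ • U₂ • ⋯ • Uₖ`, iterated extension product (associated to the right). -/
def bulletChain : List (Set (ModuleCat.{0} R)) → Set (ModuleCat.{0} R)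
  | [] => {X | Subsingleton X}
  | [U] => U
  | (U :: V :: rest) => bullet R U (bulletChain (V :: rest))

/-- `0 → M n → M (n-1) → ⋯ → M 1 → M 0 → 0` is exact (for `n ≥ 1`; the values `M i`
for `i > n` are irrelevant).  The differentials go `d i : M (i+1) ⟶ M i`. -/
def IsExactSeq (n : ℕ) (M : ℕ → ModuleCat.{0} R) (d : ∀ i, M (i+1) ⟶ M i) : Prop :=
  Function.Surjective ⇑(d 0) ∧ Function.Injective ⇑(d (n-1)) ∧
    ∀ i, i + 2 ≤ n → Function.Exact ⇑(d (i+1)) ⇑(d i)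

/-- `f : P ⟶ M` is a projective cover: `P` is projective, `f` is surjective and
its kernel is superfluous in `P`. -/
def IsProjCover {P M : ModuleCat.{0} R} (f : P ⟶ M) : Prop :=
  Module.Projective R P ∧ Function.Surjective ⇑f ∧
    ∀ N : Submodule R P, N ⊔ LinearMap.ker f.hom = ⊤ → N = ⊤

/-- `K` is a (first) syzygy of `M`, i.e. the kernel of a projective cover of `M`. -/
def IsSyzygyOf (M K : ModuleCat.{0} R) : Prop :=
  ∃ (P : ModuleCat.{0} R) (f : P ⟶ M), IsProjCover R f ∧
    Nonempty (K ≅ ModuleCat.of R (LinearMap.ker f.hom))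

/-- `K` is an `n`-th syzygy `Ωⁿ(M)` of `M`. -/
def IsNSyzygy : ℕ → ModuleCat.{0} R → ModuleCat.{0} R → Prop
  | 0, M, K => Nonempty (K ≅ M)
  | (n+1), M, K => ∃ K', IsNSyzygy n M K' ∧ IsSyzygyOf R K' K

/-- `g : M ⟶ I` is an injective envelope: `I` is injective, `g` is injective and
its image is essential in `I`. -/
def IsInjEnvelope {M I : ModuleCat.{0} R} (g : M ⟶ I) : Prop :=
  Module.Injective R I ∧ Function.Injective ⇑g ∧
    ∀ N : Submodule R I, N ⊓ LinearMap.range g.hom = ⊥ → N = ⊥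

/-- `K` is a (first) cosyzygy of `M`, i.e. the cokernel of an injective envelope. -/
def IsCosyzygyOf (M K : ModuleCat.{0} R) : Prop :=
  ∃ (I : ModuleCat.{0} R) (g : M ⟶ I), IsInjEnvelope R g ∧
    Nonempty (K ≅ ModuleCat.of R (I ⧸ LinearMap.range g.hom))

/-- `K` is an `n`-th cosyzygy `Ω⁻ⁿ(M)` of `M`. -/
def IsNCosyzygy : ℕ → ModuleCat.{0} R → ModuleCat.{0} R → Prop
  | 0, M, K => Nonempty (K ≅ M)
  | (n+1), M, K => ∃ K', IsNCosyzygy n M K' ∧ IsCosyzygyOf R K' K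

/-- `K` admits an exact sequence `0 → V_m → ⋯ → V_1 → V_0 → K → 0`
with all `V_i ∈ add V`. -/
def HasAddResolution (V : ModuleCat.{0} R) (m : ℕ) (K : ModuleCat.{0} R) : Prop :=
  ∃ (Z : ℕ → ModuleCat.{0} R) (d : ∀ i, Z (i+1) ⟶ Z i),
    IsExactSeq R (m+1) Z d ∧ Nonempty (Z 0 ≅ K) ∧
    ∀ i, 1 ≤ i → i ≤ m+1 → Z i ∈ addOf R V

/-- The defining property of Oppermann's weak resolution dimension at `n`. -/
def OppResolProp (n : ℕ) : Prop :=
  ∃ V : ModuleCat.{0} R, Module.Finite R V ∧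
    ∀ X : ModuleCat.{0} R, Module.Finite R X → HasAddResolution R V n X

/-- The defining property of Iyama's weak resolution dimension at `n`. -/
def IyamaResolProp (n : ℕ) : Prop :=
  ∃ V : ModuleCat.{0} R, Module.Finite R V ∧
    ∀ X : ModuleCat.{0} R, Module.Finite R X →
      ∃ Y : ModuleCat.{0} R, Module.Finite R Y ∧ X ∈ addOf R Y ∧
        HasAddResolution R V n Y

/-- Oppermann's weak resolution dimension. -/
noncomputable def owresoldim : ℕ∞ :=
  sInf {c : ℕ∞ | ∃ n : ℕ, c = n ∧ OppResolProp R n}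

/-- Iyama's weak resolution dimension. -/
noncomputable def wresoldim : ℕ∞ :=
  sInf {c : ℕ∞ | ∃ n : ℕ, c = n ∧ IyamaResolProp R n}

/-- `Λ` is an `(m,n)`-Igusa–Todorov algebra. -/
def IsITAlgebra (m n : ℕ) : Prop :=
  ∃ V : ModuleCat.{0} R, Module.Finite R V ∧
    ∀ M : ModuleCat.{0} R, Module.Finite R M →
      ∀ K : ModuleCat.{0} R, IsNSyzygy R n M K → HasAddResolution R V m K

/-- The Igusa–Todorov dimension of `Λ`. -/
noncomputable def ITdim : ℕ∞ :=
  sInf {c : ℕ∞ | ∃ m n : ℕ, c = m ∧ IsITAlgebra R m n}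

end ITPaper

namespace ITPaper

variable {R : Type} [Ring R]

lemma isSummand_refl (X : ModuleCat.{0} R) : IsSummand R X X :=
  ⟨𝟙 X, 𝟙 X, by simp⟩

lemma isSummand_trans {X Y Z : ModuleCat.{0} R} (h₁ : IsSummand R X Y)
    (h₂ : IsSummand R Y Z) : IsSummand R X Z := by
  obtain ⟨i₁, p₁, hip₁⟩ := h₁
  obtain ⟨i₂, p₂, hip₂⟩ := h₂
  refine ⟨i₁ ≫ i₂, p₂ ≫ p₁, ?_⟩
  rw [Category.assoc, ← Category.assoc i₂, hip₂, Category.id_comp, hip₁]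

lemma isSummand_of_iso {X Y : ModuleCat.{0} R} (e : X ≅ Y) : IsSummand R X Y :=
  ⟨e.hom, e.inv, e.hom_inv_id⟩

/-- Build a `ModuleCat` iso from a linear equiv of the carriers. -/
def linIso {X Y : ModuleCat.{0} R} (e : ↥X ≃ₗ[R] ↥Y) : X ≅ Y where
  hom := ModuleCat.ofHom (e : ↥X →ₗ[R] ↥Y)
  inv := ModuleCat.ofHom (e.symm : ↥Y →ₗ[R] ↥X)
  hom_inv_id := ModuleCat.hom_ext (LinearMap.ext fun x => e.symm_apply_apply x)
  inv_hom_id := ModuleCat.hom_ext (LinearMap.ext fun y => e.apply_symm_apply y)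

/-- Extract a linear equiv from a `ModuleCat` iso. -/
def isoToEquiv {X Y : ModuleCat.{0} R} (e : X ≅ Y) : ↥X ≃ₗ[R] ↥Y :=
  e.toLinearEquiv

lemma isSummand_pi {k : ℕ} {A B : Fin k → ModuleCat.{0} R}
    (h : ∀ i, IsSummand R (A i) (B i)) :
    IsSummand R (ModuleCat.of R (∀ i, ↥(A i))) (ModuleCat.of R (∀ i, ↥(B i))) := by
  choose ii pp hh using h
  refine ⟨ModuleCat.ofHom (ITHelp3.piMap fun i => (ii i).hom),
    ModuleCat.ofHom (ITHelp3.piMap fun i => (pp i).hom), ?_⟩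
  refine ModuleCat.hom_ext (LinearMap.ext fun x => ?_)
  funext i
  exact congrArg (fun f => ModuleCat.Hom.hom f (x i)) (hh i)

lemma mem_addClosure_of_summand {S : Set (ModuleCat.{0} R)} {X : ModuleCat.{0} R} {k : ℕ}
    {f : Fin k → ModuleCat.{0} R} (hf : ∀ i, f i ∈ S)
    (h : IsSummand R X (ModuleCat.of R (∀ i, ↥(f i)))) : X ∈ addClosure R S :=
  ⟨k, f, hf, h⟩

lemma singleSummand {Y : ModuleCat.{0} R} :
    IsSummand R Y (ModuleCat.of R (∀ _ : Fin 1, ↥Y)) :=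
  isSummand_of_iso (linIso ((LinearEquiv.funUnique (Fin 1) R ↥Y).symm))

lemma mem_addClosure_single {S : Set (ModuleCat.{0} R)} {X Y : ModuleCat.{0} R}
    (hY : Y ∈ S) (h : IsSummand R X Y) : X ∈ addClosure R S :=
  mem_addClosure_of_summand (f := fun _ : Fin 1 => Y) (fun _ => hY)
    (isSummand_trans h singleSummand)

lemma addClosure_summand {S : Set (ModuleCat.{0} R)} {X Y : ModuleCat.{0} R}
    (hY : Y ∈ addClosure R S) (h : IsSummand R X Y) : X ∈ addClosure R S := by
  obtain ⟨k, f, hf, hs⟩ := hY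
  exact ⟨k, f, hf, isSummand_trans h hs⟩

lemma addClosure_mono {S S' : Set (ModuleCat.{0} R)} (h : S ⊆ S') :
    addClosure R S ⊆ addClosure R S' := by
  rintro X ⟨k, f, hf, hs⟩
  exact ⟨k, f, fun i => h (hf i), hs⟩

lemma mem_addOf_of_summand_pow {X T : ModuleCat.{0} R} {k : ℕ}
    (h : IsSummand R X (ModuleCat.of R (∀ _ : Fin k, ↥T))) : X ∈ addOf R T :=
  mem_addClosure_of_summand (f := fun _ : Fin k => T) (fun _ => rfl) h

lemma exists_pow_of_mem_addOf {X T : ModuleCat.{0} R} (h : X ∈ addOf R T) :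
    ∃ k, IsSummand R X (ModuleCat.of R (∀ _ : Fin k, ↥T)) := by
  obtain ⟨k, f, hf, hs⟩ := h
  have hfT : f = fun _ => T := funext fun i => hf i
  subst hfT
  exact ⟨k, hs⟩

lemma mem_addOf_of_iso {X T : ModuleCat.{0} R} (e : ↥X ≃ₗ[R] ↥T) : X ∈ addOf R T :=
  mem_addClosure_single rfl (isSummand_of_iso (linIso e))

lemma addOf_subset_of_summand {T P : ModuleCat.{0} R} (h : IsSummand R T P) :
    addOf R T ⊆ addOf R P := by
  intro X hX
  obtain ⟨k, hs⟩ := exists_pow_of_mem_addOf hX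
  exact mem_addOf_of_summand_pow (isSummand_trans hs (isSummand_pi (fun _ => h)))

lemma bullet_mono {U U' V V' : Set (ModuleCat.{0} R)} (hU : U ⊆ U') (hV : V ⊆ V') :
    bullet R U V ⊆ bullet R U' V' :=
  addClosure_mono (by rintro M ⟨A, hA, C, hC, hses⟩; exact ⟨A, hU hA, C, hV hC, hses⟩)

lemma bulletChain_shape (m : ℕ) (F : ℕ → Set (ModuleCat.{0} R)) :
    bulletChain R ((List.range (m+2)).map fun j => F j) =
      bullet R (F 0) (bulletChain R ((List.range (m+1)).map fun j => F (j+1))) := by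
  rw [List.range_succ_eq_map (n := m+1), List.map_cons, List.map_map,
    List.range_succ_eq_map (n := m)]
  simp only [List.map_cons, List.map_map]
  rfl

lemma lemE0 {T C X : ModuleCat.{0} R} (hTC : IsCosyzygyOf R T C) (hX : X ∈ addOf R T) :
    ∃ (J : ModuleCat.{0} R) (u : X ⟶ J), Module.Injective R ↥J ∧ Function.Injective u ∧
      ModuleCat.of R (↥J ⧸ LinearMap.range u.hom) ∈ addOf R C := by
  obtain ⟨I, g, ⟨hIinj, hginj, -⟩, ⟨eC⟩⟩ := hTC
  obtain ⟨k, hsum⟩ := exists_pow_of_mem_addOf hX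
  obtain ⟨s, p, hsp⟩ := hsum
  haveI : ∀ _ : Fin k, Module.Injective R ↥I := fun _ => hIinj
  haveI : Module.Injective R (∀ _ : Fin k, ↥I) := ITHelp3.injective_pi
  obtain ⟨H, u, hHinj, huinj, α, β, hβα⟩ :=
    ITHelp2.summ (R := R) (X := ↥X) (Y := ∀ _ : Fin k, ↥T) (J := ∀ _ : Fin k, ↥I)
      (Q := ∀ _ : Fin k, (↥I ⧸ LinearMap.range g.hom))
      (ITHelp3.piMap fun _ => g.hom)
      (ITHelp3.piMap_injective fun _ => hginj)
      (ITHelp3.piMap fun _ => (LinearMap.range g.hom).mkQ)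
      (ITHelp3.piMap_surjective fun _ => Submodule.mkQ_surjective _)
      (ITHelp3.piMap_exact fun _ => ITHelp3.exact_mkQ _)
      s.hom p.hom (fun x => congrArg (fun f => ModuleCat.Hom.hom f x) hsp)
  refine ⟨ModuleCat.of R ↥H, ModuleCat.ofHom u, hHinj, huinj, ?_⟩
  have h1 : IsSummand R (ModuleCat.of R (↥H ⧸ LinearMap.range u))
      (ModuleCat.of R (∀ _ : Fin k, (↥I ⧸ LinearMap.range g.hom))) :=
    ⟨ModuleCat.ofHom α, ModuleCat.ofHom β, ModuleCat.hom_ext (LinearMap.ext hβα)⟩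
  have h2 : IsSummand R
      (ModuleCat.of R (∀ _ : Fin k, (↥I ⧸ LinearMap.range g.hom)))
      (ModuleCat.of R (∀ _ : Fin k, ↥C)) := by
    refine isSummand_of_iso (linIso (LinearEquiv.piCongrRight fun _ => ?_))
    exact (isoToEquiv eC).symm
  exact mem_addOf_of_summand_pow (isSummand_trans h1 h2)

lemma lemE : ∀ (m : ℕ) (T C : ℕ → ModuleCat.{0} R),
    (∀ j, j ≤ m → IsCosyzygyOf R (T j) (C j)) →
    ∀ X ∈ bulletChain R ((List.range (m+1)).map fun j => addOf R (T j)),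
    ∃ (J : ModuleCat.{0} R) (u : X ⟶ J), Module.Injective R ↥J ∧ Function.Injective u ∧
      ModuleCat.of R (↥J ⧸ LinearMap.range u.hom) ∈
        bulletChain R ((List.range (m+1)).map fun j => addOf R (C j)) := by
  intro m
  induction m with
  | zero =>
    intro T C h X hX
    exact lemE0 (h 0 le_rfl) hX
  | succ m ih =>
    intro T C h X hX
    rw [bulletChain_shape] at hX
    obtain ⟨k, f, hfmem, hs⟩ := hX
    have key : ∀ i : Fin k, ∃ (JJ : ModuleCat.{0} R) (w : f i ⟶ JJ),
        Module.Injective R ↥JJ ∧ Function.Injective w ∧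
        ModuleCat.of R (↥JJ ⧸ LinearMap.range w.hom) ∈
          {N | ∃ A ∈ addOf R (C 0), ∃ Cq ∈ bulletChain R
            ((List.range (m+1)).map fun j => addOf R (C (j+1))), SES R A N Cq} := by
      intro i
      obtain ⟨A, hA, Cq, hCq, fA, gC, hfinj, hgsurj, hexact⟩ := hfmem i
      obtain ⟨JA, uA, hJAinj, huAinj, hQAmem⟩ := lemE0 (h 0 (by omega)) hA
      obtain ⟨JC, uC, hJCinj, huCinj, hQCmem⟩ :=
        ih (fun j => T (j+1)) (fun j => C (j+1)) (fun j hj => h (j+1) (by omega)) Cq hCq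
      haveI := hJAinj
      haveI := hJCinj
      obtain ⟨v, hvinj, qa, qc, hqainj, hqcsurj, hqaqc⟩ :=
        ITHelp3.ext_embed (R := R) fA.hom hfinj gC.hom hgsurj hexact
          uA.hom huAinj (LinearMap.range uA.hom).mkQ (Submodule.mkQ_surjective _)
          (ITHelp3.exact_mkQ uA.hom)
          uC.hom huCinj (LinearMap.range uC.hom).mkQ (Submodule.mkQ_surjective _)
          (ITHelp3.exact_mkQ uC.hom)
      refine ⟨ModuleCat.of R (↥JA × ↥JC), ModuleCat.ofHom v, ITHelp3.injective_prod, hvinj, ?_⟩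
      exact ⟨ModuleCat.of R (↥JA ⧸ LinearMap.range uA.hom), hQAmem,
        ModuleCat.of R (↥JC ⧸ LinearMap.range uC.hom), hQCmem, ModuleCat.ofHom qa, ModuleCat.ofHom qc, hqainj, hqcsurj, hqaqc⟩
    choose JJ w hJJinj hwinj hQmem using key
    haveI : ∀ i : Fin k, Module.Injective R ↥(JJ i) := hJJinj
    haveI : Module.Injective R (∀ i, ↥(JJ i)) := ITHelp3.injective_pi
    obtain ⟨s, p, hsp⟩ := hs
    obtain ⟨H, u, hHinj, huinj, α, β, hβα⟩ :=
      ITHelp2.summ (R := R) (X := ↥X) (Y := ∀ i, ↥(f i)) (J := ∀ i, ↥(JJ i))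
        (Q := ∀ i, (↥(JJ i) ⧸ LinearMap.range (w i).hom))
        (ITHelp3.piMap fun i => (w i).hom)
        (ITHelp3.piMap_injective hwinj)
        (ITHelp3.piMap fun i => (LinearMap.range (w i).hom).mkQ)
        (ITHelp3.piMap_surjective fun _ => Submodule.mkQ_surjective _)
        (ITHelp3.piMap_exact fun _ => ITHelp3.exact_mkQ _)
        s.hom p.hom (fun x => congrArg (fun f => ModuleCat.Hom.hom f x) hsp)
    refine ⟨ModuleCat.of R ↥H, ModuleCat.ofHom u, hHinj, huinj, ?_⟩
    rw [bulletChain_shape]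
    exact mem_addClosure_of_summand
      (f := fun i => ModuleCat.of R (↥(JJ i) ⧸ LinearMap.range (w i).hom))
      hQmem ⟨ModuleCat.ofHom α, ModuleCat.ofHom β, ModuleCat.hom_ext (LinearMap.ext hβα)⟩

lemma main : ∀ (n : ℕ) (W : ℕ → ModuleCat.{0} R) (d : ∀ i, W (i+1) ⟶ W i),
    IsExactSeq R (n+1) W d → ∀ S : ℕ → ModuleCat.{0} R,
    (∀ i, i ≤ n → IsNCosyzygy R i (W (i+1)) (S i)) →
    W 0 ∈ bulletChain R ((List.range (n+1)).map fun i => addOf R (S i)) := by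
  intro n
  induction n with
  | zero =>
    intro W d hW S hS
    obtain ⟨hsurj, hinj, -⟩ := hW
    obtain ⟨e0⟩ := hS 0 le_rfl
    have e1 : ↥(W 1) ≃ₗ[R] ↥(W 0) :=
      LinearEquiv.ofBijective (d 0).hom ⟨hinj, hsurj⟩
    show W 0 ∈ addOf R (S 0)
    exact mem_addOf_of_iso (((isoToEquiv e0).trans e1).symm)
  | succ n ih =>
    classical
    intro W d hW S hS
    obtain ⟨hsurj, hinjtop, hmid⟩ := hW
    set Kmod := LinearMap.ker (d 0).hom with hKdef
    have hex10 : Function.Exact ⇑(d 1) ⇑(d 0) := hmid 0 (by omega)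
    let K : ModuleCat.{0} R := ModuleCat.of R ↥Kmod
    let W' : ℕ → ModuleCat.{0} R := fun i => match i with
      | 0 => K
      | (j+1) => W (j+2)
    let d' : ∀ i, W' (i+1) ⟶ W' i := fun i => match i with
      | 0 => ModuleCat.ofHom (LinearMap.codRestrict Kmod (d 1).hom (fun c => (hex10 (d 1 c)).mpr ⟨c, rfl⟩))
      | (j+1) => d (j+2)
    have hW' : IsExactSeq R (n+1) W' d' := by
      refine ⟨?_, ?_, ?_⟩
      · have hgen : ∀ z : ↥Kmod, ∃ x, LinearMap.codRestrict Kmod (d 1).hom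
            (fun c => (hex10 (d 1 c)).mpr ⟨c, rfl⟩) x = z := by
          intro z
          obtain ⟨x, hx⟩ := (hex10 (z : ↥(W 1))).mp z.2
          exact ⟨x, Subtype.ext hx⟩
        exact hgen
      · match n with
        | 0 =>
          intro a b hab
          exact hinjtop (congrArg Subtype.val hab)
        | (j+1) =>
          exact hinjtop
      · intro i hi
        match i with
        | 0 =>
          intro y
          constructor
          · intro hy
            have h0 : d 1 y = 0 := congrArg Subtype.val hy
            exact (hmid 1 (by omega) y).mp h0
          · rintro ⟨x, rfl⟩
            exact Subtype.ext ((hmid 1 (by omega) (d 2 x)).mpr ⟨x, rfl⟩)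
        | (j+1) =>
          exact hmid (j+2) (by omega)
    have hch : ∀ j, j ≤ n → ∃ K', IsNCosyzygy R j (W (j+2)) K' ∧
        IsCosyzygyOf R K' (S (j+1)) := fun j hj => hS (j+1) (by omega)
    let S' : ℕ → ModuleCat.{0} R := fun j => if h : j ≤ n then (hch j h).choose else K
    have hS'spec : ∀ j, j ≤ n → IsNCosyzygy R j (W' (j+1)) (S' j) := fun j hj => by
      show IsNCosyzygy R j (W (j+2)) (if h : j ≤ n then (hch j h).choose else K)
      rw [dif_pos hj]
      exact (hch j hj).choose_spec.1
    have hS'cos : ∀ j, j ≤ n → IsCosyzygyOf R (S' j) (S (j+1)) := fun j hj => by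
      show IsCosyzygyOf R (if h : j ≤ n then (hch j h).choose else K) (S (j+1))
      rw [dif_pos hj]
      exact (hch j hj).choose_spec.2
    have hKmem := ih W' d' hW' S' hS'spec
    obtain ⟨J, v, hJinj, hvinj, hQmem⟩ := lemE n S' (fun j => S (j+1)) hS'cos K hKmem
    haveI := hJinj
    obtain ⟨jB, πQ, σ, πM, hjBinj, hπQsurj, hexact2, hπMσ⟩ :=
      ITHelp4.pushout_summand (R := R) (K := ↥Kmod) (B := ↥(W 1)) (M := ↥(W 0)) (J := ↥J)
        Kmod.subtype (Submodule.injective_subtype Kmod)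
        (d 0).hom hsurj
        (fun y => ⟨fun hy => ⟨⟨y, hy⟩, rfl⟩, fun ⟨x, hx⟩ => hx ▸ x.2⟩)
        v.hom hvinj
    rw [bulletChain_shape]
    have hW1mem : W 1 ∈ addOf R (S 0) := by
      obtain ⟨e0⟩ := hS 0 (by omega)
      exact mem_addOf_of_iso (isoToEquiv e0).symm
    refine mem_addClosure_single (Y := ModuleCat.of R
        ((↥J × ↥(W 1)) ⧸ LinearMap.range (v.hom.prod (-(Kmod.subtype))))) ?_
        ⟨ModuleCat.ofHom σ, ModuleCat.ofHom πM, ModuleCat.hom_ext (LinearMap.ext hπMσ)⟩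
    exact ⟨W 1, hW1mem, ModuleCat.of R (↥J ⧸ LinearMap.range v.hom), hQmem,
      ModuleCat.ofHom jB, ModuleCat.ofHom πQ, hjBinj, hπQsurj, hexact2⟩

lemma chain_subset_bracket : ∀ (n : ℕ) (S : ℕ → ModuleCat.{0} R) (P : ModuleCat.{0} R),
    (∀ i, i ≤ n → IsSummand R (S i) P) →
    bulletChain R ((List.range (n+1)).map fun i => addOf R (S i)) ⊆ bracket R P (n+1) := by
  intro n
  induction n with
  | zero =>
    intro S P h X hX
    exact addOf_subset_of_summand (h 0 le_rfl) hX
  | succ n ih =>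
    intro S P h X hX
    rw [bulletChain_shape] at hX
    exact bullet_mono (addOf_subset_of_summand (h 0 (by omega)))
      (ih (fun j => S (j+1)) P (fun j hj => h (j+1) (by omega))) hX

end ITPaper

namespace ITPaper

/-- If `0 → Xₙ → ⋯ → X₁ → X₀ → M → 0` is exact (here `W 0 = M`
and `W (i+1) = Xᵢ`), and `S i` is an `i`-th cosyzygy `Ω⁻ⁱ(Xᵢ)`, then
`M ∈ [X₀]₁ • [Ω⁻¹(X₁)]₁ • ⋯ • [Ω⁻ⁿ(Xₙ)]₁` and in particular
`M ∈ [⊕_{i=0}^n Ω⁻ⁱ(Xᵢ)]_{n+1}`. -/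
theorem stmt_7 (R : Type) [Ring R] [IsArtinianRing R] (n : ℕ)
    (W : ℕ → ModuleCat.{0} R) (hfin : ∀ i, i ≤ n+1 → Module.Finite R (W i))
    (d : ∀ i, W (i+1) ⟶ W i) (hW : IsExactSeq R (n+1) W d)
    (S : ℕ → ModuleCat.{0} R) (hS : ∀ i, i ≤ n → IsNCosyzygy R i (W (i+1)) (S i)) :
    W 0 ∈ bulletChain R (List.map (fun i => addOf R (S i)) (List.range (n+1))) ∧
    W 0 ∈ bracket R (ModuleCat.of R (∀ i : Fin (n+1), S i)) (n+1) := by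
  classical
  have h1 := main n W d hW S hS
  have hsummands : ∀ i, i ≤ n → IsSummand R (S i)
      (ModuleCat.of R (∀ i : Fin (n+1), S i)) := by
    intro i hi
    have hlt : i < n+1 := by omega
    refine ⟨ModuleCat.ofHom (LinearMap.single R (fun j : Fin (n+1) => ↥(S ↑j)) ⟨i, hlt⟩),
      ModuleCat.ofHom (LinearMap.proj (R := R) (φ := fun j : Fin (n+1) => ↥(S ↑j)) ⟨i, hlt⟩), ?_⟩
    exact ModuleCat.hom_ext (LinearMap.ext fun x => Pi.single_eq_same _ _)
  exact ⟨h1, chain_subset_bracket n S _ hsummands h1⟩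

end ITPaper
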